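/- For every $r \ge 1$ and $\alpha > 0$ there exists $n_0$ such that for every $r$-uniform hypergraph $F = (V,E)$ on $n \ge n_0$ vertices with edge density $\rho = |E|/\binom{n}{r} \in [\alpha, 1-\alpha]$, there exist two distinct vertices $v, v' \in V$ with $|D_F(v,v')| \ge \alpha(1-\alpha) n^{r-1}/(r+1)!$. -/

import Mathlib

set_option linter.unusedSectionVars false
set_option maxHeartbeats 1000000

open Finset

variable {V : Type} [DecidableEq V] [Fintype V]

def winIdx (r i : ℕ) : Finset (Fin (2*r)) :=
  Finset.univ.filter fun j : Fin (2*r) => i ≤ (j:ℕ) ∧ (j:ℕ) < i + r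

def win (r i : ℕ) (x : Fin (2*r) ↪ V) : Finset V := (winIdx r i).image x

lemma mem_win {r i : ℕ} {x : Fin (2*r) ↪ V} {v : V} :
    v ∈ win r i x ↔ ∃ j : Fin (2*r), (i ≤ (j:ℕ) ∧ (j:ℕ) < i + r) ∧ x j = v := by
  simp [win, winIdx, Finset.mem_image, and_assoc]

lemma card_filter_fin (m a b : ℕ) (h : b ≤ m) :
    ((Finset.univ : Finset (Fin m)).filter fun j : Fin m => a ≤ (j:ℕ) ∧ (j:ℕ) < b).card = b - a := by
  have : ((Finset.univ : Finset (Fin m)).filter fun j : Fin m => a ≤ (j:ℕ) ∧ (j:ℕ) < b).card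
      = (Finset.Ico a b).card := by
    refine Finset.card_nbij (fun j => (j : ℕ)) ?_ ?_ ?_
    · intro j hj
      simp only [Finset.mem_coe, mem_filter] at hj
      simp [Finset.mem_Ico, hj.2.1, hj.2.2]
    · intro a _ b _ hab
      exact Fin.val_injective hab
    · intro c hc
      simp only [Finset.coe_Ico, Set.mem_Ico] at hc
      refine ⟨⟨c, by omega⟩, ?_, rfl⟩
      simp [hc.1, hc.2]
  rw [this, Nat.card_Ico]

lemma card_win {r i : ℕ} (h : i + r ≤ 2*r) (x : Fin (2*r) ↪ V) : (win r i x).card = r := by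
  rw [win, Finset.card_image_of_injective _ x.injective, winIdx, card_filter_fin _ _ _ h]
  omega

lemma win_inter {r i : ℕ} (hi : i + 1 + r ≤ 2*r) (x : Fin (2*r) ↪ V) :
    (win r i x ∩ win r (i+1) x).card = r - 1 := by
  have : win r i x ∩ win r (i+1) x
      = ((Finset.univ : Finset (Fin (2*r))).filter
          fun j : Fin (2*r) => i + 1 ≤ (j:ℕ) ∧ (j:ℕ) < i + r).image x := by
    ext v
    simp only [Finset.mem_inter, mem_win, Finset.mem_image, Finset.mem_filter]
    constructor
    · rintro ⟨⟨j, ⟨hj1, hj2⟩, rfl⟩, ⟨k, ⟨hk1, hk2⟩, hk⟩⟩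
      have := congrArg Fin.val (x.injective hk)
      refine ⟨j, ⟨Finset.mem_univ _, ?_, hj2⟩, rfl⟩
      omega
    · rintro ⟨j, ⟨-, hj1, hj2⟩, rfl⟩
      exact ⟨⟨j, ⟨by omega, by omega⟩, rfl⟩, ⟨j, ⟨by omega, by omega⟩, rfl⟩⟩
  rw [this, Finset.card_image_of_injective _ x.injective, card_filter_fin _ _ _ (by omega)]
  omega

lemma exists_descent {r : ℕ} {P : ℕ → Prop} (h0 : P 0) (hrn : ¬ P r) :
    ∃ i < r, P i ∧ ¬ P (i+1) := by
  by_contra h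
  push_neg at h
  have : ∀ i, i ≤ r → P i := by
    intro i
    induction i with
    | zero => intro _; exact h0
    | succ k ih => intro hk; exact h k (by omega) (ih (by omega))
  exact hrn (this r le_rfl)
def glue {r : ℕ} (f g : Fin r → V) : Fin (2*r) → V :=
  fun j => if h : (j:ℕ) < r then f ⟨j, h⟩ else g ⟨(j:ℕ) - r, by omega⟩

lemma glue_lt {r : ℕ} (f g : Fin r → V) (j : Fin (2*r)) (h : (j:ℕ) < r) :
    glue f g j = f ⟨j, h⟩ := dif_pos h

lemma glue_ge {r : ℕ} (f g : Fin r → V) (j : Fin (2*r)) (h : ¬ ((j:ℕ) < r)) :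
    glue f g j = g ⟨(j:ℕ) - r, by omega⟩ := dif_neg h

lemma fiber_lower {r : ℕ} {A B : Finset V} (hA : A.card = r) (hB : B.card = r)
    (hAB : Disjoint A B) :
    r.factorial * r.factorial ≤
      (Finset.univ.filter (fun x : Fin (2*r) ↪ V => win r 0 x = A ∧ win r r x = B)).card := by
  classical
  have cA : Fintype.card ↥A = r := by simp [hA]
  have cB : Fintype.card ↥B = r := by simp [hB]
  have hinj0 : ∀ p : (Fin r ≃ ↥A) × (Fin r ≃ ↥B),
      Function.Injective (glue (fun z => ((p.1 z : V))) (fun z => ((p.2 z : V)))) := by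
    intro p j k hjk
    by_cases hj : (j:ℕ) < r <;> by_cases hk : (k:ℕ) < r
    · rw [glue_lt _ _ _ hj, glue_lt _ _ _ hk] at hjk
      have h2 := congrArg Fin.val (p.1.injective (Subtype.ext hjk))
      simp only at h2
      exact Fin.ext h2
    · rw [glue_lt _ _ _ hj, glue_ge _ _ _ hk] at hjk
      exact absurd ((p.2 _).2) (fun hmem => Finset.disjoint_left.mp hAB (hjk ▸ (p.1 _).2) hmem)
    · rw [glue_ge _ _ _ hj, glue_lt _ _ _ hk] at hjk
      exact absurd ((p.1 _).2) (fun hmem => Finset.disjoint_left.mp hAB (hjk ▸ hmem) ((p.2 _).2))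
    · rw [glue_ge _ _ _ hj, glue_ge _ _ _ hk] at hjk
      have h2 := congrArg Fin.val (p.2.injective (Subtype.ext hjk))
      simp only at h2
      exact Fin.ext (by omega)
  set F : ((Fin r ≃ ↥A) × (Fin r ≃ ↥B)) → (Fin (2*r) ↪ V) := fun p =>
    ⟨glue (fun z => ((p.1 z : V))) (fun z => ((p.2 z : V))), hinj0 p⟩ with hF
  have hFapp : ∀ p j, F p j = glue (fun z => ((p.1 z : V))) (fun z => ((p.2 z : V))) j :=
    fun p j => rfl
  have hmaps : ∀ p : (Fin r ≃ ↥A) × (Fin r ≃ ↥B), p ∈ (Finset.univ : Finset _) →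
      F p ∈ Finset.univ.filter (fun x : Fin (2*r) ↪ V => win r 0 x = A ∧ win r r x = B) := by
    intro p _
    rw [Finset.mem_filter]
    refine ⟨Finset.mem_univ _, ?_, ?_⟩
    · ext v
      rw [mem_win]
      constructor
      · rintro ⟨j, ⟨-, hj⟩, rfl⟩
        rw [hFapp, glue_lt _ _ _ (show (j:ℕ) < r by omega)]
        exact (p.1 _).2
      · intro hv
        refine ⟨⟨(p.1.symm ⟨v, hv⟩ : Fin r), by omega⟩, ⟨Nat.zero_le _, by
          simpa using (p.1.symm ⟨v, hv⟩).isLt⟩, ?_⟩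
        rw [hFapp, glue_lt _ _ _ (p.1.symm ⟨v, hv⟩).isLt]
        rw [show (⟨((p.1.symm ⟨v, hv⟩ : Fin r) : ℕ), (p.1.symm ⟨v, hv⟩).isLt⟩ : Fin r)
            = p.1.symm ⟨v, hv⟩ from Fin.eta _ _]
        rw [Equiv.apply_symm_apply]
    · ext v
      rw [mem_win]
      constructor
      · rintro ⟨j, ⟨hj1, hj2⟩, rfl⟩
        have hnl : ¬ ((j:ℕ) < r) := by omega
        rw [hFapp, glue_ge _ _ _ hnl]
        exact (p.2 _).2
      · intro hv
        have hzlt := (p.2.symm ⟨v, hv⟩).isLt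
        refine ⟨⟨((p.2.symm ⟨v, hv⟩ : Fin r):ℕ) + r, by omega⟩,
          ⟨Nat.le_add_left r _, Nat.add_lt_add_right hzlt r⟩, ?_⟩
        have hnl : ¬ ((((p.2.symm ⟨v, hv⟩ : Fin r):ℕ) + r) < r) := by omega
        rw [hFapp, glue_ge _ _ _ hnl]
        rw [show (⟨((p.2.symm ⟨v, hv⟩ : Fin r):ℕ) + r - r, by omega⟩ : Fin r)
            = p.2.symm ⟨v, hv⟩ from Fin.ext (by simp)]
        rw [Equiv.apply_symm_apply]
  have hinj : Set.InjOn F (Finset.univ : Finset ((Fin r ≃ ↥A) × (Fin r ≃ ↥B))) := by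
    intro p _ q _ hpq
    have hpt : ∀ j : Fin (2*r), F p j = F q j := by
      intro j; rw [hpq]
    refine Prod.ext ?_ ?_
    · apply Equiv.ext
      intro z
      have h3 := hpt ⟨(z:ℕ), by omega⟩
      rw [hFapp, hFapp, glue_lt _ _ _ z.isLt, glue_lt _ _ _ z.isLt, Fin.eta] at h3
      exact Subtype.ext h3
    · apply Equiv.ext
      intro z
      have hnl : ¬ (((z:ℕ) + r) < r) := by omega
      have h3 := hpt ⟨(z:ℕ) + r, by omega⟩
      rw [hFapp, hFapp, glue_ge _ _ _ hnl, glue_ge _ _ _ hnl] at h3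
      rw [show (⟨(z:ℕ) + r - r, by omega⟩ : Fin r) = z from Fin.ext (by simp)] at h3
      exact Subtype.ext h3
  have hle := Finset.card_le_card_of_injOn F hmaps hinj
  calc r.factorial * r.factorial
      = Fintype.card ((Fin r ≃ ↥A) × (Fin r ≃ ↥B)) := by
        rw [Fintype.card_prod, Fintype.card_equiv ((Fintype.equivFinOfCardEq cA).symm),
          Fintype.card_equiv ((Fintype.equivFinOfCardEq cB).symm), Fintype.card_fin]
    _ = (Finset.univ : Finset ((Fin r ≃ ↥A) × (Fin r ≃ ↥B))).card := (Finset.card_univ).symm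
    _ ≤ _ := hle
lemma xi_mem_sdiff {r i : ℕ} (hi : i + 1 + r ≤ 2*r) (hr : 1 ≤ r) {A B : Finset V}
    {x : Fin (2*r) ↪ V} (h1 : win r i x = A) (h2 : win r (i+1) x = B) :
    x ⟨i, by omega⟩ ∈ A \ B ∧ x ⟨i + r, by omega⟩ ∈ B \ A := by
  constructor
  · rw [Finset.mem_sdiff]
    constructor
    · rw [← h1, mem_win]
      exact ⟨⟨i, by omega⟩, ⟨le_refl _, show i < i + r by omega⟩, rfl⟩
    · rw [← h2, mem_win]
      rintro ⟨j, ⟨hj1, hj2⟩, hj⟩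
      have := x.injective hj
      have := congrArg Fin.val this
      simp only [Fin.val_mk] at this
      omega
  · rw [Finset.mem_sdiff]
    constructor
    · rw [← h2, mem_win]
      exact ⟨⟨i + r, by omega⟩, ⟨show i + 1 ≤ i + r by omega,
        show i + r < i + 1 + r by omega⟩, rfl⟩
    · rw [← h1, mem_win]
      rintro ⟨j, ⟨hj1, hj2⟩, hj⟩
      have := congrArg Fin.val (x.injective hj)
      simp only [Fin.val_mk] at this
      omega

lemma fiber_upper {r i : ℕ} (hi : i + 1 + r ≤ 2*r) (hr : 1 ≤ r) {A B : Finset V}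
    (hA : A.card = r) (hB : B.card = r) (hABi : (A ∩ B).card = r - 1) :
    (Finset.univ.filter (fun x : Fin (2*r) ↪ V => win r i x = A ∧ win r (i+1) x = B)).card
      ≤ (r-1).factorial * (Fintype.card V).descFactorial (r-1) := by
  classical
  set fib := Finset.univ.filter
    (fun x : Fin (2*r) ↪ V => win r i x = A ∧ win r (i+1) x = B) with hfib
  rcases fib.eq_empty_or_nonempty with he | ⟨x₀, hx₀⟩
  · rw [he]; simp
  -- index sets
  set Jint : Finset (Fin (2*r)) :=
    Finset.univ.filter (fun j => i + 1 ≤ (j:ℕ) ∧ (j:ℕ) < i + r) with hJint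
  set Jout : Finset (Fin (2*r)) :=
    Finset.univ.filter (fun j => (j:ℕ) < i ∨ i + r < (j:ℕ)) with hJout
  have cardJint : Jint.card = r - 1 := by
    have : Jint.card = (Finset.Ico (i+1) (i+r)).card := by
      refine Finset.card_nbij (fun j => (j : ℕ)) ?_ ?_ ?_
      · intro j hj
        simp only [hJint, Finset.mem_coe, mem_filter] at hj
        simp [Finset.mem_Ico] <;> omega
      · intro a _ b _ hab
        exact Fin.val_injective hab
      · intro a ha
        simp only [Finset.coe_Ico, Set.mem_Ico] at ha
        refine ⟨⟨a, by omega⟩, ?_, rfl⟩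
        simp [hJint] <;> omega
    rw [this, Nat.card_Ico]
    omega
  have cardJout : Jout.card = r - 1 := by
    have : Jout.card = ((Finset.range (2*r)).filter (fun a => a < i ∨ i + r < a)).card := by
      refine Finset.card_nbij (fun j => (j : ℕ)) ?_ ?_ ?_
      · intro j hj
        simp only [hJout, Finset.mem_coe, mem_filter] at hj
        simp only [Finset.mem_coe, Finset.mem_filter, Finset.mem_range]
        exact ⟨j.isLt, hj.2⟩
      · intro a _ b _ hab
        exact Fin.val_injective hab
      · intro a ha
        simp only [Finset.coe_filter, Finset.mem_range, Set.mem_setOf_eq] at ha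
        refine ⟨⟨a, ha.1⟩, ?_, rfl⟩
        simp [hJout, ha.2]
    rw [this]
    have : (Finset.range (2*r)).filter (fun a => a < i ∨ i + r < a)
        = Finset.range i ∪ Finset.Ioo (i+r) (2*r) := by
      ext a
      simp only [Finset.mem_filter, Finset.mem_range, Finset.mem_union, Finset.mem_Ioo]
      omega
    rw [this, Finset.card_union_of_disjoint (by
      rw [Finset.disjoint_left]
      intro a ha ha'
      simp only [Finset.mem_range] at ha
      simp only [Finset.mem_Ioo] at ha'
      omega)]
    rw [Finset.card_range, Nat.card_Ioo]
    omega
  have cardAB : (A ∩ B).card = r - 1 := hABi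
  have cAB : Fintype.card ↥(A ∩ B) = r - 1 := by rw [Fintype.card_coe]; exact hABi
  have cJint : Fintype.card ↥(Jint : Finset (Fin (2*r))) = r - 1 := by
    rw [Fintype.card_coe]; exact cardJint
  have cJout : Fintype.card ↥(Jout : Finset (Fin (2*r))) = r - 1 := by
    rw [Fintype.card_coe]; exact cardJout
  -- membership of interior values
  have hint : ∀ x : Fin (2*r) ↪ V, x ∈ fib → ∀ j : Fin (2*r), j ∈ Jint → x j ∈ A ∩ B := by
    intro x hx j hj
    simp only [hfib, Finset.mem_filter] at hx
    simp only [hJint, Finset.mem_filter] at hj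
    rw [Finset.mem_inter, ← hx.2.1, ← hx.2.2, mem_win, mem_win]
    exact ⟨⟨j, ⟨by omega, by omega⟩, rfl⟩, ⟨j, ⟨by omega, by omega⟩, rfl⟩⟩
  -- the map
  set G : (Fin (2*r) ↪ V) → ((↥Jint ↪ ↥(A ∩ B)) × (↥Jout ↪ V)) := fun x =>
    if hx : x ∈ fib then
      (⟨fun j => ⟨x j.1, hint x hx j.1 j.2⟩,
        fun a b hab => Subtype.ext (x.injective (congrArg Subtype.val hab))⟩,
       ⟨fun j => x j.1, fun a b hab => Subtype.ext (x.injective hab)⟩)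
    else
      (⟨fun j => ⟨x₀ j.1, hint x₀ hx₀ j.1 j.2⟩,
        fun a b hab => Subtype.ext (x₀.injective (congrArg Subtype.val hab))⟩,
       ⟨fun j => x₀ j.1, fun a b hab => Subtype.ext (x₀.injective hab)⟩) with hGdef
  have hGinj : Set.InjOn G (fib : Set (Fin (2*r) ↪ V)) := by
    intro x hx y hy hxy
    simp only [Finset.mem_coe] at hx hy
    rw [hGdef] at hxy
    simp only [dif_pos hx, dif_pos hy] at hxy
    have hx' := hx; have hy' := hy
    simp only [hfib, Finset.mem_filter] at hx' hy'
    -- values forced outside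
    have hforced := xi_mem_sdiff hi hr hx'.2.1 hx'.2.2
    have hforcedy := xi_mem_sdiff hi hr hy'.2.1 hy'.2.2
    have cardsd : (A \ B).card = 1 := by
      have := Finset.card_inter_add_card_sdiff A B
      omega
    have cardsd' : (B \ A).card = 1 := by
      have := Finset.card_inter_add_card_sdiff B A
      rw [Finset.inter_comm] at cardAB
      omega
    have heqi : x ⟨i, by omega⟩ = y ⟨i, by omega⟩ := by
      obtain ⟨a, ha⟩ := Finset.card_eq_one.mp cardsd
      rw [ha] at hforced hforcedy
      rw [Finset.mem_singleton.mp hforced.1, Finset.mem_singleton.mp hforcedy.1]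
    have heqir : x ⟨i + r, by omega⟩ = y ⟨i + r, by omega⟩ := by
      obtain ⟨a, ha⟩ := Finset.card_eq_one.mp cardsd'
      rw [ha] at hforced hforcedy
      rw [Finset.mem_singleton.mp hforced.2, Finset.mem_singleton.mp hforcedy.2]
    have h1 := congrArg Prod.fst hxy
    have h2 := congrArg Prod.snd hxy
    apply Function.Embedding.ext
    intro j
    by_cases hj1 : i + 1 ≤ (j:ℕ) ∧ (j:ℕ) < i + r
    · have hjm : j ∈ Jint := by simp [hJint] <;> omega
      exact congrArg Subtype.val (DFunLike.congr_fun h1 ⟨j, hjm⟩)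
    · by_cases hj2 : (j:ℕ) < i ∨ i + r < (j:ℕ)
      · have hjm : j ∈ Jout := by simp [hJout, hj2]
        exact DFunLike.congr_fun h2 ⟨j, hjm⟩
      · have : (j:ℕ) = i ∨ (j:ℕ) = i + r := by omega
        rcases this with h | h
        · have : j = ⟨i, by omega⟩ := Fin.ext h
          rw [this]; exact heqi
        · have : j = ⟨i + r, by omega⟩ := Fin.ext h
          rw [this]; exact heqir
  have hGmaps : ∀ x ∈ fib, G x ∈ (Finset.univ : Finset ((↥Jint ↪ ↥(A ∩ B)) × (↥Jout ↪ V))) :=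
    fun x _ => Finset.mem_univ _
  have hle := Finset.card_le_card_of_injOn G hGmaps hGinj
  calc fib.card ≤ (Finset.univ : Finset ((↥Jint ↪ ↥(A ∩ B)) × (↥Jout ↪ V))).card := hle
    _ = (r-1).factorial * (Fintype.card V).descFactorial (r-1) := by
        rw [Finset.card_univ, Fintype.card_prod, Fintype.card_embedding_eq,
          Fintype.card_embedding_eq, cAB, cJint, cJout, Nat.descFactorial_self]

def crossSet (r : ℕ) (E : Finset (Finset V)) : Finset (Finset V × Finset V) :=
  ((Finset.univ.powersetCard r) ×ˢ (Finset.univ.powersetCard r)).filter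
    fun p => p.1 ∈ E ∧ p.2 ∉ E ∧ (p.1 ∩ p.2).card = r - 1

lemma stepCount {r i : ℕ} (hr : 1 ≤ r) (hir : i < r) (E : Finset (Finset V))
    (hE : ∀ e ∈ E, e.card = r) :
    (Finset.univ.filter fun x : Fin (2*r) ↪ V => win r i x ∈ E ∧ win r (i+1) x ∉ E).card
      ≤ (crossSet r E).card * ((r-1).factorial * (Fintype.card V).descFactorial (r-1)) := by
  classical
  have hkey : ∀ x ∈ (Finset.univ.filter
      fun x : Fin (2*r) ↪ V => win r i x ∈ E ∧ win r (i+1) x ∉ E),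
      (win r i x, win r (i+1) x) ∈ crossSet r E := by
    intro x hx
    rw [Finset.mem_filter] at hx
    rw [crossSet, Finset.mem_filter, Finset.mem_product]
    refine ⟨⟨?_, ?_⟩, hx.2.1, hx.2.2, win_inter (by omega) x⟩
    · rw [Finset.mem_powersetCard_univ]
      exact card_win (by omega) x
    · rw [Finset.mem_powersetCard_univ]
      exact card_win (by omega) x
  rw [Finset.card_eq_sum_card_fiberwise hkey]
  have hb : ∀ p ∈ crossSet r E,
      ((Finset.univ.filter fun x : Fin (2*r) ↪ V => win r i x ∈ E ∧ win r (i+1) x ∉ E).filter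
        (fun x => (win r i x, win r (i+1) x) = p)).card
      ≤ (r-1).factorial * (Fintype.card V).descFactorial (r-1) := by
    intro p hp
    rw [crossSet, Finset.mem_filter, Finset.mem_product] at hp
    refine le_trans (Finset.card_le_card ?_) (fiber_upper (r := r) (i := i) (by omega) hr
      (hE p.1 hp.2.1) (Finset.mem_powersetCard_univ.mp hp.1.2) hp.2.2.2)
    intro x hx
    rw [Finset.mem_filter] at hx ⊢
    have := hx.2
    rw [Prod.ext_iff] at this
    exact ⟨Finset.mem_univ _, this.1, this.2⟩
  calc ∑ p ∈ crossSet r E, ((Finset.univ.filter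
          fun x : Fin (2*r) ↪ V => win r i x ∈ E ∧ win r (i+1) x ∉ E).filter
          (fun x => (win r i x, win r (i+1) x) = p)).card
      ≤ (crossSet r E).card • ((r-1).factorial * (Fintype.card V).descFactorial (r-1)) :=
        Finset.sum_le_card_nsmul _ _ _ hb
    _ = _ := smul_eq_mul _ _

lemma S0lower {r : ℕ} (E : Finset (Finset V)) (hE : ∀ e ∈ E, e.card = r) :
    ((E ×ˢ (Finset.univ.powersetCard r \ E)).filter
        fun p => Disjoint p.1 p.2).card * (r.factorial * r.factorial)
      ≤ (Finset.univ.filter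
          fun x : Fin (2*r) ↪ V => win r 0 x ∈ E ∧ win r r x ∉ E).card := by
  classical
  set Xd := (E ×ˢ (Finset.univ.powersetCard r \ E)).filter
    (fun p => Disjoint p.1 p.2) with hXd
  set U := Xd.biUnion (fun p => Finset.univ.filter
    fun x : Fin (2*r) ↪ V => win r 0 x = p.1 ∧ win r r x = p.2) with hU
  have hdisj : ∀ p ∈ Xd, ∀ q ∈ Xd, p ≠ q → Disjoint
      (Finset.univ.filter fun x : Fin (2*r) ↪ V => win r 0 x = p.1 ∧ win r r x = p.2)
      (Finset.univ.filter fun x : Fin (2*r) ↪ V => win r 0 x = q.1 ∧ win r r x = q.2) := by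
    intro p _ q _ hpq
    rw [Finset.disjoint_left]
    intro x hx hx'
    rw [Finset.mem_filter] at hx hx'
    exact hpq (Prod.ext (hx.2.1 ▸ hx'.2.1.symm ▸ rfl) (hx.2.2 ▸ hx'.2.2.symm ▸ rfl))
  have hUsub : U ⊆ Finset.univ.filter
      (fun x : Fin (2*r) ↪ V => win r 0 x ∈ E ∧ win r r x ∉ E) := by
    intro x hx
    rw [hU, Finset.mem_biUnion] at hx
    obtain ⟨p, hp, hxp⟩ := hx
    rw [Finset.mem_filter] at hxp
    rw [hXd, Finset.mem_filter, Finset.mem_product, Finset.mem_sdiff] at hp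
    rw [Finset.mem_filter]
    exact ⟨Finset.mem_univ _, hxp.2.1 ▸ hp.1.1, hxp.2.2 ▸ hp.1.2.2⟩
  calc Xd.card * (r.factorial * r.factorial)
      = Xd.card • (r.factorial * r.factorial) := (smul_eq_mul _ _).symm
    _ ≤ ∑ p ∈ Xd, (Finset.univ.filter
          fun x : Fin (2*r) ↪ V => win r 0 x = p.1 ∧ win r r x = p.2).card := by
        refine Finset.card_nsmul_le_sum _ _ _ ?_
        intro p hp
        rw [hXd, Finset.mem_filter, Finset.mem_product, Finset.mem_sdiff] at hp
        exact fiber_lower (hE p.1 hp.1.1) (Finset.mem_powersetCard_univ.mp hp.1.2.1) hp.2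
    _ = U.card := (Finset.card_biUnion hdisj).symm
    _ ≤ _ := Finset.card_le_card hUsub

lemma S0_le_steps {r : ℕ} (E : Finset (Finset V)) :
    (Finset.univ.filter
        fun x : Fin (2*r) ↪ V => win r 0 x ∈ E ∧ win r r x ∉ E).card
      ≤ ∑ i ∈ Finset.range r, (Finset.univ.filter
        fun x : Fin (2*r) ↪ V => win r i x ∈ E ∧ win r (i+1) x ∉ E).card := by
  classical
  refine le_trans (Finset.card_le_card ?_) (Finset.card_biUnion_le)
  intro x hx
  rw [Finset.mem_filter] at hx
  obtain ⟨i, hir, hPi, hPi1⟩ := exists_descent (r := r)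
    (P := fun i => win r i x ∈ E) hx.2.1 hx.2.2
  rw [Finset.mem_biUnion]
  exact ⟨i, Finset.mem_range.mpr hir, Finset.mem_filter.mpr ⟨Finset.mem_univ _, hPi, hPi1⟩⟩

lemma cross_to_D {r : ℕ} (hr : 1 ≤ r) (E : Finset (Finset V)) (hE : ∀ e ∈ E, e.card = r) :
    (crossSet r E).card ≤ ∑ p ∈ (Finset.univ : Finset V).offDiag,
      (((Finset.univ.powersetCard (r + 1)).filter (fun S =>
        p.1 ∈ S ∧ p.2 ∈ S ∧ ¬ ((S.erase p.1 ∈ E) ↔ (S.erase p.2 ∈ E)))).card) := by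
  classical
  rw [← Finset.card_sigma]
  refine Finset.card_le_card_of_surjOn
    (fun q : (_ : V × V) × Finset V => (q.2.erase q.1.1, q.2.erase q.1.2)) ?_
  intro p hp
  simp only [Finset.mem_coe] at hp
  rw [crossSet, Finset.mem_filter, Finset.mem_product] at hp
  obtain ⟨⟨hA1, hB1⟩, hAE, hBE, hABi⟩ := hp
  have hA : p.1.card = r := hE p.1 hAE
  have hB : p.2.card = r := Finset.mem_powersetCard_univ.mp hB1
  have hBA : (p.2 \ p.1).card = 1 := by
    have := Finset.card_inter_add_card_sdiff p.2 p.1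
    rw [Finset.inter_comm] at this
    omega
  have hAB : (p.1 \ p.2).card = 1 := by
    have := Finset.card_inter_add_card_sdiff p.1 p.2
    omega
  obtain ⟨v, hv⟩ := Finset.card_eq_one.mp hBA
  obtain ⟨v', hv'⟩ := Finset.card_eq_one.mp hAB
  have hvB : v ∈ p.2 ∧ v ∉ p.1 := by
    have : v ∈ p.2 \ p.1 := hv ▸ Finset.mem_singleton_self v
    exact Finset.mem_sdiff.mp this
  have hv'A : v' ∈ p.1 ∧ v' ∉ p.2 := by
    have : v' ∈ p.1 \ p.2 := hv' ▸ Finset.mem_singleton_self v'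
    exact Finset.mem_sdiff.mp this
  have hne : v ≠ v' := fun h => hvB.2 (h ▸ hv'A.1)
  set S := p.1 ∪ p.2 with hS
  have hSA : S.erase v = p.1 := by
    ext w
    rw [Finset.mem_erase, hS, Finset.mem_union]
    constructor
    · rintro ⟨hwv, hw | hw⟩
      · exact hw
      · by_contra hwA
        have : w ∈ p.2 \ p.1 := Finset.mem_sdiff.mpr ⟨hw, hwA⟩
        rw [hv, Finset.mem_singleton] at this
        exact hwv this
    · intro hw
      exact ⟨fun h => hvB.2 (h ▸ hw), Or.inl hw⟩
  have hSB : S.erase v' = p.2 := by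
    ext w
    rw [Finset.mem_erase, hS, Finset.mem_union]
    constructor
    · rintro ⟨hwv, hw | hw⟩
      · by_contra hwB
        have : w ∈ p.1 \ p.2 := Finset.mem_sdiff.mpr ⟨hw, hwB⟩
        rw [hv', Finset.mem_singleton] at this
        exact hwv this
      · exact hw
    · intro hw
      exact ⟨fun h => hv'A.2 (h ▸ hw), Or.inr hw⟩
  have hScard : S.card = r + 1 := by
    rw [hS]
    have h1 := Finset.card_union_add_card_inter p.1 p.2
    omega
  refine ⟨⟨(v, v'), S⟩, ?_, ?_⟩
  · rw [Finset.mem_coe, Finset.mem_sigma]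
    constructor
    · rw [Finset.mem_offDiag]
      exact ⟨Finset.mem_univ _, Finset.mem_univ _, hne⟩
    · rw [Finset.mem_filter, Finset.mem_powersetCard_univ]
      refine ⟨hScard, ?_, ?_, ?_⟩
      · exact Finset.mem_union.mpr (Or.inr hvB.1)
      · exact Finset.mem_union.mpr (Or.inl hv'A.1)
      · simp only [hSA, hSB]
        tauto
  · simp only
    rw [hSA, hSB]

lemma Xd_lower {r : ℕ} (E : Finset (Finset V)) (hE : ∀ e ∈ E, e.card = r) :
    E.card * (((Finset.univ : Finset V).powersetCard r).card - E.card)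
      ≤ ((E ×ˢ ((Finset.univ : Finset V).powersetCard r \ E)).filter
          fun p : Finset V × Finset V => Disjoint p.1 p.2).card
        + ((Finset.univ : Finset V).powersetCard r).card
          * (r * ((Fintype.card V - 1).choose (r-1))) := by
  classical
  set K := (Finset.univ : Finset V).powersetCard r with hK
  have hEK : E ⊆ K := by
    intro e he
    rw [hK, Finset.mem_powersetCard_univ]
    exact hE e he
  -- single-vertex star bound
  have hstar : ∀ a : V, (K.filter fun B => a ∈ B).card ≤ (Fintype.card V - 1).choose (r-1) := by
    intro a
    have : (K.filter fun B => a ∈ B).card ≤ ((Finset.univ.erase a).powersetCard (r-1)).card := by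
      refine Finset.card_le_card_of_injOn (fun B => B.erase a) ?_ ?_
      · intro B hB
        rw [Finset.mem_coe, Finset.mem_filter, hK, Finset.mem_powersetCard_univ] at hB
        rw [Finset.mem_coe, Finset.mem_powersetCard]
        constructor
        · intro x hx
          rw [Finset.mem_erase] at hx ⊢
          exact ⟨hx.1, Finset.mem_univ _⟩
        · rw [Finset.card_erase_of_mem hB.2, hB.1]
      · intro B hB B' hB' hBB'
        rw [Finset.mem_coe, Finset.mem_filter] at hB hB'
        have h1 := Finset.insert_erase hB.2
        have h2 := Finset.insert_erase hB'.2
        rw [← h1, ← h2]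
        exact congrArg (insert a) hBB'
    rw [Finset.card_powersetCard, Finset.card_erase_of_mem (Finset.mem_univ a),
      Finset.card_univ] at this
    exact this
  -- overlapping bound per fixed A of card r
  have hover : ∀ A : Finset V, A.card = r →
      (K.filter fun B => ¬ Disjoint A B).card
        ≤ r * ((Fintype.card V - 1).choose (r-1)) := by
    intro A hA
    have hsub : (K.filter fun B => ¬ Disjoint A B) ⊆ A.biUnion (fun a => K.filter fun B => a ∈ B) := by
      intro B hB
      rw [Finset.mem_filter] at hB
      obtain ⟨a, ha, hab⟩ := Finset.not_disjoint_iff.mp hB.2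
      rw [Finset.mem_biUnion]
      exact ⟨a, ha, Finset.mem_filter.mpr ⟨hB.1, hab⟩⟩
    refine le_trans (Finset.card_le_card hsub) (le_trans Finset.card_biUnion_le ?_)
    calc ∑ a ∈ A, (K.filter fun B => a ∈ B).card
        ≤ A.card • ((Fintype.card V - 1).choose (r-1)) :=
          Finset.sum_le_card_nsmul _ _ _ (fun a _ => hstar a)
      _ = r * ((Fintype.card V - 1).choose (r-1)) := by rw [hA, smul_eq_mul]
  -- split the product
  have hsplit : E.card * (K.card - E.card)
      = ((E ×ˢ (K \ E)).filter fun p : Finset V × Finset V => Disjoint p.1 p.2).card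
        + ((E ×ˢ (K \ E)).filter fun p : Finset V × Finset V => ¬ Disjoint p.1 p.2).card := by
    rw [Finset.card_filter_add_card_filter_not, Finset.card_product,
      Finset.card_sdiff_of_subset hEK]
  rw [hsplit]
  refine Nat.add_le_add le_rfl ?_
  -- bound the non-disjoint part
  have hkey : ∀ p ∈ ((E ×ˢ (K \ E)).filter fun p : Finset V × Finset V => ¬ Disjoint p.1 p.2),
      p.1 ∈ E := by
    intro p hp
    rw [Finset.mem_filter, Finset.mem_product] at hp
    exact hp.1.1
  rw [Finset.card_eq_sum_card_fiberwise hkey]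
  calc ∑ A ∈ E, (((E ×ˢ (K \ E)).filter fun p : Finset V × Finset V => ¬ Disjoint p.1 p.2).filter
        fun p => p.1 = A).card
      ≤ E.card • (r * ((Fintype.card V - 1).choose (r-1))) := by
        refine Finset.sum_le_card_nsmul _ _ _ ?_
        intro A hA
        refine le_trans ?_ (hover A (hE A hA))
        refine Finset.card_le_card_of_injOn (fun p => p.2) ?_ ?_
        · intro p hp
          rw [Finset.mem_coe, Finset.mem_filter] at hp
          obtain ⟨hp1, hp2⟩ := hp
          rw [Finset.mem_filter] at hp1
          rw [Finset.mem_product, Finset.mem_sdiff] at *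
          rw [Finset.mem_coe, Finset.mem_filter]
          constructor
          · exact hp1.1.2.1
          · rw [← hp2]; exact hp1.2
        · intro p hp q hq hpq
          rw [Finset.mem_coe, Finset.mem_filter] at hp hq
          exact Prod.ext (hp.2.trans hq.2.symm) hpq
    _ ≤ K.card * (r * ((Fintype.card V - 1).choose (r-1))) := by
        rw [smul_eq_mul]
        exact Nat.mul_le_mul_right _ (Finset.card_le_card hEK)

lemma core_num (s k B q G : ℝ) (hs : 0 < s) (hs4 : s ≤ 1/4) (hk : 1 ≤ k) (hB : 0 < B)
    (h4 : 4*k^2 ≤ s*q) (hG : B*q - 2*k^2*B ≤ G) :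
    s*(B*q) ≤ (k+1) * (s*G - k^2*B) := by
  have h5 : s*(B*q) - 2*s*k^2*B ≤ s*G := by nlinarith [mul_le_mul_of_nonneg_left hG hs.le]
  have hk2B : (0:ℝ) ≤ k^2*B := by positivity
  have e1 : (k+1)*(2*s+1) ≤ 3*k := by
    nlinarith [mul_nonneg (by linarith : (0:ℝ) ≤ 1/4 - s) (by linarith : (0:ℝ) ≤ k)]
  have e2 : (k+1)*(2*s+1)*(k^2*B) ≤ 3*k*(k^2*B) := mul_le_mul_of_nonneg_right e1 hk2B
  have hkB : (0:ℝ) ≤ k*B := by positivity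
  have e3 : (k*B)*(4*k^2) ≤ (k*B)*(s*q) := mul_le_mul_of_nonneg_left h4 hkB
  have e4 : 3*k*(k^2*B) ≤ (k*B)*(4*k^2) := by nlinarith [hk2B]
  have e5 := mul_le_mul_of_nonneg_left h5 (show (0:ℝ) ≤ k+1 by linarith)
  nlinarith [e2, e3, e4, e5]

theorem stmt5 (r : ℕ) (hr : 1 ≤ r) (α : ℝ) (hα : 0 < α) :
    ∃ n₀ : ℕ, ∀ (V : Type) [Fintype V] [DecidableEq V] (n : ℕ),
      Fintype.card V = n → n₀ ≤ n →
      ∀ E : Finset (Finset V), (∀ e ∈ E, e.card = r) →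
      α ≤ (E.card : ℝ) / (n.choose r : ℝ) → (E.card : ℝ) / (n.choose r : ℝ) ≤ 1 - α →
      ∃ v v' : V, v ≠ v' ∧
        α * (1 - α) * (n : ℝ) ^ (r - 1) / (Nat.factorial (r + 1) : ℝ) ≤
          (((Finset.univ.powersetCard (r + 1)).filter (fun S =>
            v ∈ S ∧ v' ∈ S ∧ ¬ ((S.erase v ∈ E) ↔ (S.erase v' ∈ E)))).card : ℝ) := by
  classical
  refine ⟨8*(r*r) + ⌈(8*r^2 : ℝ)/α⌉₊ + 2*r + 2, ?_⟩
  intro V _ _ n hcard hn E hE hd1 hd2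
  by_contra hcon
  have hcon' : ∀ v v' : V, v ≠ v' →
      (((Finset.univ.powersetCard (r + 1)).filter (fun S =>
        v ∈ S ∧ v' ∈ S ∧ ¬ ((S.erase v ∈ E) ↔ (S.erase v' ∈ E)))).card : ℝ)
        < α * (1 - α) * (n : ℝ) ^ (r - 1) / (Nat.factorial (r + 1) : ℝ) :=
    fun v v' hne => not_le.mp (fun hge => hcon ⟨v, v', hne, hge⟩)
  clear hcon
  set T : ℝ := α * (1 - α) * (n : ℝ) ^ (r - 1) / (Nat.factorial (r + 1) : ℝ) with hTdef
  -- basic numerology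
  have hr0 : 0 < r := hr
  have hn2 : 2 ≤ n := by omega
  have hnr : r ≤ n := by omega
  have hq : (0:ℝ) < (n:ℝ) := by positivity
  have hq0 : (n:ℝ) ≠ 0 := ne_of_gt hq
  have hNpos : 0 < n.choose r := Nat.choose_pos hnr
  set q : ℝ := (n:ℝ) with hqdef
  set k : ℝ := (r:ℝ) with hkdef
  have hk1 : 1 ≤ k := by rw [hkdef]; exact_mod_cast hr
  have hkq : k ≤ q := by rw [hkdef, hqdef]; exact_mod_cast hnr
  have hαq : 8*k^2 ≤ α*q := by
    have h1 : (⌈(8 * k^2 : ℝ)/α⌉₊ : ℕ) ≤ n := by omega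
    have h2 : (8 * k^2 : ℝ)/α ≤ q := by
      rw [hqdef]
      exact_mod_cast Nat.ceil_le.mp h1
    have h3 := (div_le_iff₀ hα).mp h2
    linarith
  -- density facts
  set NR : ℝ := ((n.choose r : ℕ) : ℝ) with hNRdef
  have hNRpos : (0:ℝ) < NR := by rw [hNRdef]; exact_mod_cast hNpos
  set aR : ℝ := (E.card : ℝ) with haRdef
  have ha1 : α * NR ≤ aR := by
    have := (le_div_iff₀ hNRpos).mp hd1
    linarith
  have ha2 : aR ≤ (1 - α) * NR := by
    have := (div_le_iff₀ hNRpos).mp hd2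
    linarith
  have hα2 : α ≤ 1/2 := by nlinarith [ha1, ha2, hNRpos]
  set s : ℝ := α * (1 - α) with hsdef
  have hs_lb : α/2 ≤ s := by
    rw [hsdef]
    nlinarith [mul_nonneg hα.le (by linarith : (0:ℝ) ≤ 1/2 - α)]
  have hs_ub : s ≤ 1/4 := by rw [hsdef]; nlinarith [sq_nonneg (α - 1/2)]
  have hs_pos : 0 < s := by
    rw [hsdef]
    exact mul_pos hα (by linarith)
  -- the combinatorial sets
  set K := (Finset.univ : Finset V).powersetCard r with hKdef
  have hEK : E ⊆ K := fun e he => by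
    rw [hKdef, Finset.mem_powersetCard_univ]; exact hE e he
  have hKcard : K.card = n.choose r := by
    rw [hKdef, Finset.card_powersetCard, Finset.card_univ, hcard]
  have hEleN : E.card ≤ n.choose r := hKcard ▸ Finset.card_le_card hEK
  set Xd := ((E ×ˢ (K \ E)).filter fun p : Finset V × Finset V => Disjoint p.1 p.2) with hXddef
  -- ℕ chain
  have f1 : E.card * (n.choose r - E.card)
      ≤ Xd.card + (n.choose r) * (r * ((n - 1).choose (r-1))) := by
    have := Xd_lower E hE
    rw [hKcard] at this  -- may fail; adjust
    rw [hcard] at this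
    exact this
  have f2 := S0lower E hE
  have f3 := S0_le_steps (r := r) E
  have f4 : ∑ i ∈ Finset.range r, (Finset.univ.filter
        fun x : Fin (2*r) ↪ V => win r i x ∈ E ∧ win r (i+1) x ∉ E).card
      ≤ r * ((crossSet r E).card * ((r-1).factorial * (Fintype.card V).descFactorial (r-1))) := by
    calc ∑ i ∈ Finset.range r, (Finset.univ.filter
          fun x : Fin (2*r) ↪ V => win r i x ∈ E ∧ win r (i+1) x ∉ E).card
        ≤ (Finset.range r).card • ((crossSet r E).card
            * ((r-1).factorial * (Fintype.card V).descFactorial (r-1))) := by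
          refine Finset.sum_le_card_nsmul _ _ _ ?_
          intro i hi
          exact stepCount hr (Finset.mem_range.mp hi) E hE
      _ = r * ((crossSet r E).card * ((r-1).factorial * (Fintype.card V).descFactorial (r-1))) := by
          rw [Finset.card_range, smul_eq_mul]
  have f5 : Xd.card * (r.factorial * r.factorial)
      ≤ (crossSet r E).card * (n.descFactorial (r-1)) * r.factorial := by
    calc Xd.card * (r.factorial * r.factorial)
        ≤ r * ((crossSet r E).card * ((r-1).factorial * (Fintype.card V).descFactorial (r-1))) :=
          le_trans f2 (le_trans f3 f4)
      _ = (crossSet r E).card * ((Fintype.card V).descFactorial (r-1))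
            * (r * (r-1).factorial) := by ring
      _ = (crossSet r E).card * (n.descFactorial (r-1)) * r.factorial := by
          rw [Nat.mul_factorial_pred hr0.ne', hcard]
  have f6 : Xd.card * r.factorial ≤ (crossSet r E).card * (n.descFactorial (r-1)) :=
    Nat.le_of_mul_le_mul_right (by
      calc Xd.card * r.factorial * r.factorial
          = Xd.card * (r.factorial * r.factorial) := by ring
        _ ≤ (crossSet r E).card * (n.descFactorial (r-1)) * r.factorial := f5)
      (Nat.factorial_pos r)
  have f7 := cross_to_D hr E hE
  -- the real target quantity
  have hTpos : 0 < T := by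
    rw [hTdef]
    exact div_pos (mul_pos hs_pos (pow_pos hq _)) (by exact_mod_cast Nat.factorial_pos (r+1))
  -- f8 : sum of D-cards < T * q^2
  have hODne : ((Finset.univ : Finset V).offDiag).Nonempty := by
    obtain ⟨v, w, hvw⟩ := Fintype.exists_pair_of_one_lt_card (by omega : 1 < Fintype.card V)
    exact ⟨(v, w), Finset.mem_offDiag.mpr ⟨Finset.mem_univ _, Finset.mem_univ _, hvw⟩⟩
  have f8 : ((∑ p ∈ (Finset.univ : Finset V).offDiag,
      (((Finset.univ.powersetCard (r + 1)).filter (fun S =>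
        p.1 ∈ S ∧ p.2 ∈ S ∧ ¬ ((S.erase p.1 ∈ E) ↔ (S.erase p.2 ∈ E)))).card) : ℕ) : ℝ)
      < T * (q * q) := by
    rw [Nat.cast_sum]
    calc ∑ p ∈ (Finset.univ : Finset V).offDiag,
          ((((Finset.univ.powersetCard (r + 1)).filter (fun S =>
            p.1 ∈ S ∧ p.2 ∈ S ∧ ¬ ((S.erase p.1 ∈ E) ↔ (S.erase p.2 ∈ E)))).card : ℝ))
        < ∑ _p ∈ (Finset.univ : Finset V).offDiag, T := by
          refine Finset.sum_lt_sum_of_nonempty hODne ?_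
          intro p hp
          have hne := (Finset.mem_offDiag.mp hp).2.2
          exact hcon' p.1 p.2 hne
      _ = (((Finset.univ : Finset V).offDiag.card : ℕ) : ℝ) * T := by
          rw [Finset.sum_const, nsmul_eq_mul]
      _ ≤ (q * q) * T := by
          refine mul_le_mul_of_nonneg_right ?_ (le_of_lt hTpos)
          rw [Finset.offDiag_card, Finset.card_univ, hcard]
          calc ((n*n - n : ℕ) : ℝ) ≤ ((n*n : ℕ) : ℝ) := by exact_mod_cast Nat.sub_le _ _
            _ = q * q := by push_cast; ring
      _ = T * (q * q) := mul_comm _ _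
  -- casts
  set F : ℝ := (r.factorial : ℝ) with hFdef
  have hF : (0:ℝ) < F := by rw [hFdef]; exact_mod_cast Nat.factorial_pos r
  set F1 : ℝ := ((r-1).factorial : ℝ) with hF1def
  have hF1 : (0:ℝ) < F1 := by rw [hF1def]; exact_mod_cast Nat.factorial_pos (r-1)
  have hFrF1 : F = k * F1 := by
    rw [hFdef, hF1def, hkdef, ← Nat.mul_factorial_pred hr0.ne']
    push_cast; ring
  set C' : ℝ := (((n-1).choose (r-1) : ℕ) : ℝ) with hC'def
  have hC'0 : 0 ≤ C' := by rw [hC'def]; positivity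
  set Xr : ℝ := (Xd.card : ℝ) with hXrdef
  set Crr : ℝ := ((crossSet r E).card : ℝ) with hCrrdef
  have hCrr0 : 0 ≤ Crr := by rw [hCrrdef]; positivity
  set Dr : ℝ := ((n.descFactorial (r-1) : ℕ) : ℝ) with hDrdef
  have hDr0 : 0 ≤ Dr := by rw [hDrdef]; positivity
  have c1 : aR * (NR - aR) ≤ Xr + NR * (k * C') := by
    have := (Nat.cast_le (α := ℝ)).mpr f1
    push_cast [Nat.cast_sub hEleN] at this
    rw [haRdef, hNRdef, hXrdef, hkdef, hC'def]
    push_cast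
    linarith [this]
  have c2 : Xr * F ≤ Crr * Dr := by
    rw [hXrdef, hFdef, hCrrdef, hDrdef]
    exact_mod_cast f6
  have c3 : Crr < T * (q * q) := lt_of_le_of_lt (by rw [hCrrdef]; exact_mod_cast f7) f8
  have c4 : Dr ≤ q^(r-1) := by
    rw [hDrdef, hqdef]
    exact_mod_cast Nat.descFactorial_le_pow n (r-1)
  have c5 : (q - k)^r ≤ F * NR := by
    have h1 : (n - r)^r ≤ n.descFactorial r := by
      calc (n - r)^r ≤ (n + 1 - r)^r := Nat.pow_le_pow_left (by omega) r
        _ ≤ n.descFactorial r := Nat.pow_sub_le_descFactorial n r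
    rw [Nat.descFactorial_eq_factorial_mul_choose] at h1
    have h2 : (((n-r)^r : ℕ) : ℝ) ≤ ((r.factorial * n.choose r : ℕ) : ℝ) := by exact_mod_cast h1
    push_cast [Nat.cast_sub hnr] at h2
    rw [hqdef, hkdef, hFdef, hNRdef]
    push_cast
    exact h2
  have c6 : F * NR ≤ q^r := by
    have h1 : r.factorial * n.choose r ≤ n^r := by
      rw [← Nat.descFactorial_eq_factorial_mul_choose]
      exact Nat.descFactorial_le_pow n r
    rw [hqdef, hFdef, hNRdef]
    exact_mod_cast h1
  have c7 : F1 * C' ≤ q^(r-1) := by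
    have h1 : (r-1).factorial * (n-1).choose (r-1) ≤ n^(r-1) := by
      rw [← Nat.descFactorial_eq_factorial_mul_choose]
      calc (n-1).descFactorial (r-1) ≤ (n-1)^(r-1) := Nat.descFactorial_le_pow _ _
        _ ≤ n^(r-1) := Nat.pow_le_pow_left (by omega) _
    rw [hqdef, hF1def, hC'def]
    exact_mod_cast h1
  -- density quadratic
  have key1 : s * NR^2 ≤ aR * (NR - aR) := by
    have h1 : (0:ℝ) ≤ (aR - α*NR) * ((1-α)*NR - aR) :=
      mul_nonneg (by linarith) (by linarith)
    have hid : aR*(NR - aR) - α*(1-α)*NR^2 = (aR - α*NR)*((1-α)*NR - aR) := by ring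
    rw [hsdef]
    linarith [h1, hid]
  set W : ℝ := s * NR^2 - NR * (k * C') with hWdef
  have hmain1 : W ≤ Xr := by rw [hWdef]; linarith
  have hmain2 : W * F ≤ Crr * Dr :=
    le_trans (mul_le_mul_of_nonneg_right hmain1 hF.le) c2
  have hqpow_pos : (0:ℝ) < q^(r-1) := pow_pos hq _
  have hmain3 : Crr * Dr < T * (q * q) * q^(r-1) := by
    calc Crr * Dr ≤ Crr * q^(r-1) := mul_le_mul_of_nonneg_left c4 hCrr0
      _ < T * (q * q) * q^(r-1) := by
          exact mul_lt_mul_of_pos_right c3 hqpow_pos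
  -- exponent bookkeeping
  have hAB : q^(2*r) = q^(2*r-1) * q := by
    rw [← pow_succ]
    congr 1
    omega
  have hq2r : q^(r-1) * (q * q) * q^(r-1) = q^(2*r) := by
    have h1 : (r-1) + 2 + (r-1) = 2*r := by omega
    calc q^(r-1) * (q * q) * q^(r-1) = q^((r-1) + 2 + (r-1)) := by
          rw [pow_add, pow_add]; ring
      _ = q^(2*r) := by rw [h1]
  have hFac : ((r+1).factorial : ℝ) = (k + 1) * F := by
    rw [Nat.factorial_succ, hkdef, hFdef]
    push_cast; ring
  have hT_eq : T * (q * q) * q^(r-1) * ((k+1) * F) = s * q^(2*r) := by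
    have h1 : ((k+1) * F) ≠ 0 := by positivity
    rw [hTdef, hFac, ← hq2r]
    field_simp
  -- the P, Q bound
  set P : ℝ := NR * F with hPdef
  set Q : ℝ := C' * F1 with hQdef
  have hP_lb : (q - k)^r ≤ P := by rw [hPdef]; linarith [c5]
  have hP_ub : P ≤ q^r := by rw [hPdef]; linarith [c6]
  have hQ_ub : Q ≤ q^(r-1) := by rw [hQdef]; linarith [c7]
  have hQ0 : 0 ≤ Q := by rw [hQdef]; positivity
  have hqk0 : 0 ≤ q - k := by linarith
  have hP0 : 0 ≤ P := le_trans (by positivity) hP_lb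
  have hWF2 : W * F^2 = s * P^2 - k^2 * (P * Q) := by
    rw [hWdef, hPdef, hQdef, hFrF1]
    ring
  have hpow_qk : (q - k)^(2*r) = ((q - k)^r)^2 := by
    rw [← pow_mul]
    congr 1
    omega
  have hpow_q2r1 : q^r * q^(r-1) = q^(2*r-1) := by
    rw [← pow_add]
    congr 1
    omega
  have hlow : s * (q-k)^(2*r) - k^2 * q^(2*r-1) ≤ W * F^2 := by
    rw [hWF2]
    have h1 : (q-k)^(2*r) ≤ P^2 := by
      rw [hpow_qk]
      exact pow_le_pow_left₀ (by positivity) hP_lb 2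
    have h2 : P * Q ≤ q^(2*r-1) := by
      rw [← hpow_q2r1]
      exact mul_le_mul hP_ub hQ_ub hQ0 (by positivity)
    have h3 := mul_le_mul_of_nonneg_left h1 hs_pos.le
    have h4 := mul_le_mul_of_nonneg_left h2 (by positivity : (0:ℝ) ≤ k^2)
    linarith
  -- Bernoulli
  have hber : q^(2*r) - 2*k^2*q^(2*r-1) ≤ (q - k)^(2*r) := by
    have h2 : (-2:ℝ) ≤ -(k/q) := by
      have : k/q ≤ 1 := (div_le_one hq).mpr hkq
      linarith
    have h1 := one_add_mul_le_pow h2 (2*r)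
    have h3 := mul_le_mul_of_nonneg_right h1 (le_of_lt (pow_pos hq (2*r)))
    calc q^(2*r) - 2*k^2*q^(2*r-1)
        = (1 + ((2*r : ℕ):ℝ) * (-(k/q))) * q^(2*r) := by
          rw [hAB]
          push_cast [hkdef]
          field_simp
          ring
      _ ≤ (1 + (-(k/q)))^(2*r) * q^(2*r) := h3
      _ = (q - k)^(2*r) := by
          rw [← mul_pow]
          congr 1
          field_simp
          ring
  -- core numeric inequality
  have hBpos : (0:ℝ) < q^(2*r-1) := pow_pos hq _
  have hsq4 : 4*k^2 ≤ s*q := by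
    have h1 := mul_le_mul_of_nonneg_right hs_lb hq.le
    linarith [h1, hαq]
  have core : s * q^(2*r) ≤ (k+1) * (s*(q-k)^(2*r) - k^2*q^(2*r-1)) := by
    have hber2 : q^(2*r-1)*q - 2*k^2*q^(2*r-1) ≤ (q-k)^(2*r) := by rw [← hAB]; exact hber
    have := core_num s k (q^(2*r-1)) q ((q-k)^(2*r)) hs_pos hs_ub hk1 hBpos hsq4 hber2
    rw [hAB]
    exact this
  -- final contradiction
  have final1 : s * q^(2*r) ≤ (k+1) * (W * F^2) := by
    calc s * q^(2*r) ≤ (k+1) * (s*(q-k)^(2*r) - k^2*q^(2*r-1)) := core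
      _ ≤ (k+1) * (W * F^2) := by
          refine mul_le_mul_of_nonneg_left hlow (by linarith)
  have final2 : (k+1) * (W * F^2) < s * q^(2*r) := by
    have h1 : W * F < T * (q * q) * q^(r-1) := lt_of_le_of_lt hmain2 hmain3
    have h2 : W * F * ((k+1) * F) < T * (q * q) * q^(r-1) * ((k+1) * F) := by
      refine mul_lt_mul_of_pos_right h1 (by positivity)
    rw [hT_eq] at h2
    calc (k+1) * (W * F^2) = W * F * ((k+1) * F) := by ring
      _ < s * q^(2*r) := h2
  exact absurd final1 (not_le.mpr final2)
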